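/- Let x : ℝ → ℝ^(N+1) solve x'(t) = B(t)x(t) with B continuous. Then for t ≥ s, ‖x(t)‖₁ ≤ exp(∫_s^t γ(B(τ)) dτ) · ‖x(s)‖₁, where γ(B) = max_j (b_jj + Σ_{i≠j}|b_ij|) is the l^1 logarithmic norm. -/

import Mathlib

open Real Filter Matrix Topology

private lemma key_sum_ineq {N : ℕ} (M : Matrix (Fin (N+1)) (Fin (N+1)) ℝ)
    (v : Fin (N+1) → ℝ) {h : ℝ} (hh : 0 ≤ h) (hsmall : ∀ i, 0 ≤ 1 + h * M i i) :
    ∑ i, |v i + h * (M *ᵥ v) i| ≤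
      (1 + h * ⨆ j, (M j j + ∑ i ∈ Finset.univ.erase j, |M i j|)) * ∑ i, |v i| := by
  set γ := ⨆ j, (M j j + ∑ i ∈ Finset.univ.erase j, |M i j|) with hγdef
  have hbdd : BddAbove (Set.range fun j => M j j + ∑ i ∈ Finset.univ.erase j, |M i j|) :=
    (Set.finite_range _).bddAbove
  have hγ : ∀ j, M j j + ∑ i ∈ Finset.univ.erase j, |M i j| ≤ γ := fun j => le_ciSup hbdd j
  have step1 : ∑ i, |v i + h * (M *ᵥ v) i| ≤
      ∑ i, ((1 + h * M i i) * |v i| + h * ∑ j ∈ Finset.univ.erase i, |M i j| * |v j|) := by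
    apply Finset.sum_le_sum
    intro i _
    have hmv : (M *ᵥ v) i = M i i * v i + ∑ j ∈ Finset.univ.erase i, M i j * v j := by
      simp only [Matrix.mulVec, dotProduct]
      rw [← Finset.add_sum_erase _ _ (Finset.mem_univ i)]
    have e1 : v i + h * (M *ᵥ v) i
        = (1 + h * M i i) * v i + h * ∑ j ∈ Finset.univ.erase i, M i j * v j := by
      rw [hmv]; ring
    rw [e1]
    refine (abs_add_le _ _).trans ?_
    gcongr
    · rw [abs_mul, abs_of_nonneg (hsmall i)]
    · rw [abs_mul, abs_of_nonneg hh]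
      gcongr
      refine (Finset.abs_sum_le_sum_abs _ _).trans ?_
      apply Finset.sum_le_sum
      intro j _
      rw [abs_mul]
  have swap : ∑ i, ∑ j ∈ Finset.univ.erase i, |M i j| * |v j|
      = ∑ j, ∑ i ∈ Finset.univ.erase j, |M i j| * |v j| := by
    refine Finset.sum_comm' ?_
    intro i j
    simp [Finset.mem_erase, ne_comm]
  have step2 : ∑ i, ((1 + h * M i i) * |v i| + h * ∑ j ∈ Finset.univ.erase i, |M i j| * |v j|)
      = (∑ i, |v i|) + h * ∑ j, (M j j + ∑ i ∈ Finset.univ.erase j, |M i j|) * |v j| := by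
    rw [Finset.sum_add_distrib, ← Finset.mul_sum, swap]
    have : ∀ j, (M j j + ∑ i ∈ Finset.univ.erase j, |M i j|) * |v j|
        = M j j * |v j| + (∑ i ∈ Finset.univ.erase j, |M i j| * |v j|) := by
      intro j; rw [add_mul, Finset.sum_mul]
    simp only [this, Finset.sum_add_distrib]
    simp only [add_mul, one_mul, Finset.sum_add_distrib, ← Finset.mul_sum, mul_assoc]
    ring
  have step3 : h * ∑ j, (M j j + ∑ i ∈ Finset.univ.erase j, |M i j|) * |v j|
      ≤ h * ∑ j, γ * |v j| := by
    apply mul_le_mul_of_nonneg_left _ hh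
    exact Finset.sum_le_sum fun j _ => mul_le_mul_of_nonneg_right (hγ j) (abs_nonneg _)
  calc ∑ i, |v i + h * (M *ᵥ v) i|
      ≤ (∑ i, |v i|) + h * ∑ j, (M j j + ∑ i ∈ Finset.univ.erase j, |M i j|) * |v j| := by
        rw [← step2]; exact step1
    _ ≤ (∑ i, |v i|) + h * ∑ j, γ * |v j| := by linarith
    _ = (1 + h * γ) * ∑ i, |v i| := by rw [← Finset.mul_sum]; ring

private lemma slope_eventually_lt {N : ℕ} (B : ℝ → Matrix (Fin (N+1)) (Fin (N+1)) ℝ)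
    (x : ℝ → Fin (N+1) → ℝ) (hx : ∀ t, HasDerivAt x (B t *ᵥ x t) t) (t r : ℝ)
    (hr : (⨆ j, (B t j j + ∑ i ∈ Finset.univ.erase j, |B t i j|)) * (∑ i, |x t i|) < r) :
    ∀ᶠ z in 𝓝[>] t, slope (fun τ => ∑ i, |x τ i|) t z < r := by
  set γt := ⨆ j, (B t j j + ∑ i ∈ Finset.univ.erase j, |B t i j|) with hγt
  set v := x t with hv
  set M := B t with hM
  set w := M *ᵥ v with hw
  have hwd : ∀ i, HasDerivAt (fun τ => x τ i) (w i) t := hasDerivAt_pi.1 (hx t)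
  have hsl : ∀ i : Fin (N+1), Tendsto (slope (fun τ => x τ i) t) (𝓝[>] t) (𝓝 (w i)) := fun i =>
    (hasDerivAt_iff_tendsto_slope.1 (hwd i)).mono_left
      (nhdsWithin_mono t fun z hz => ne_of_gt hz)
  have hE : Tendsto (fun z => ∑ i, |slope (fun τ => x τ i) t z - w i|) (𝓝[>] t) (𝓝 0) := by
    have h1 : ∀ i : Fin (N+1),
        Tendsto (fun z => |slope (fun τ => x τ i) t z - w i|) (𝓝[>] t) (𝓝 0) := by
      intro i
      have h2 : Tendsto (fun z => slope (fun τ => x τ i) t z - w i) (𝓝[>] t) (𝓝 0) := by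
        simpa using (hsl i).sub (tendsto_const_nhds (x := w i))
      simpa using h2.abs
    simpa using tendsto_finset_sum Finset.univ (fun i _ => h1 i)
  set δ : ℝ := (1 + ∑ i, |M i i|)⁻¹ with hδdef
  have hsum0 : (0:ℝ) ≤ ∑ i, |M i i| := Finset.sum_nonneg fun i _ => abs_nonneg _
  have hδpos : 0 < δ := by positivity
  have hδsmall : ∀ h : ℝ, 0 ≤ h → h ≤ δ → ∀ i, 0 ≤ 1 + h * M i i := by
    intro h h0 hhδ i
    have h1 : |M i i| ≤ ∑ j, |M j j| :=
      Finset.single_le_sum (f := fun j => |M j j|) (fun j _ => abs_nonneg _) (Finset.mem_univ i)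
    have h2 : h * |M i i| ≤ δ * (1 + ∑ j, |M j j|) := by
      apply mul_le_mul hhδ (by linarith) (abs_nonneg _) hδpos.le
    rw [hδdef, inv_mul_cancel₀ (by positivity)] at h2
    have h3 : -(h * |M i i|) ≤ h * M i i := by
      rw [← mul_neg]
      exact mul_le_mul_of_nonneg_left (neg_abs_le _) h0
    linarith
  have ev1 : ∀ᶠ z in 𝓝[>] t, z ∈ Set.Ioo t (t + δ) :=
    Ioo_mem_nhdsGT_of_mem ⟨le_refl t, by linarith⟩
  have ev2 : ∀ᶠ z in 𝓝[>] t,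
      (∑ i, |slope (fun τ => x τ i) t z - w i|) < r - γt * ∑ i, |v i| := by
    exact Filter.Tendsto.eventually_lt_const (by linarith) hE
  filter_upwards [ev1, ev2] with z hz hEz
  set h := z - t with hh
  have hh0 : 0 < h := by simp [hh]; exact hz.1
  have hhδ : h ≤ δ := by simp [hh]; linarith [hz.2]
  have hxz : ∀ i, x z i = v i + h * slope (fun τ => x τ i) t z := by
    intro i
    rw [slope_def_field, hh]
    field_simp
    have hne : z - t ≠ 0 := hh0.ne'
    rw [mul_div_cancel_left₀ _ hne, hv]; ring
  have hgz : (∑ i, |x z i|) ≤ (1 + h * γt) * (∑ i, |v i|)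
      + h * ∑ i, |slope (fun τ => x τ i) t z - w i| := by
    have step : ∀ i : Fin (N+1), |x z i| ≤ |v i + h * w i|
        + h * |slope (fun τ => x τ i) t z - w i| := by
      intro i
      rw [hxz i]
      have e : v i + h * slope (fun τ => x τ i) t z
          = (v i + h * w i) + h * (slope (fun τ => x τ i) t z - w i) := by ring
      rw [e]
      refine (abs_add_le _ _).trans ?_
      rw [abs_mul, abs_of_pos hh0]
    calc (∑ i, |x z i|) ≤ ∑ i, (|v i + h * w i| + h * |slope (fun τ => x τ i) t z - w i|) :=
          Finset.sum_le_sum fun i _ => step i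
      _ = (∑ i, |v i + h * w i|) + h * ∑ i, |slope (fun τ => x τ i) t z - w i| := by
          rw [Finset.sum_add_distrib, Finset.mul_sum]
      _ ≤ (1 + h * γt) * (∑ i, |v i|) + h * ∑ i, |slope (fun τ => x τ i) t z - w i| := by
          have := key_sum_ineq M v hh0.le (hδsmall h hh0.le hhδ)
          rw [hw]
          linarith [this]
  have hslope_le : slope (fun τ => ∑ i, |x τ i|) t z
      ≤ γt * (∑ i, |v i|) + ∑ i, |slope (fun τ => x τ i) t z - w i| := by
    rw [slope_def_field, ← hh]
    rw [div_le_iff₀ hh0]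
    have : (∑ i, |x z i|) - (∑ i, |x t i|) ≤
        h * (γt * (∑ i, |v i|) + ∑ i, |slope (fun τ => x τ i) t z - w i|) := by
      have hvt : (∑ i, |x t i|) = ∑ i, |v i| := by rw [hv]
      rw [hvt]
      nlinarith [hgz]
    linarith [this]
  linarith [hslope_le, hEz]

theorem l1_upper_bound_log_norm {N : ℕ}
    (B : ℝ → Matrix (Fin (N+1)) (Fin (N+1)) ℝ)
    (hBcont : Continuous B)
    (x : ℝ → Fin (N+1) → ℝ)
    (hx : ∀ t, HasDerivAt x (B t *ᵥ x t) t)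
    (s : ℝ) :
    ∀ t, s ≤ t →
      ∑ i, |x t i| ≤
        Real.exp (∫ τ in s..t,
            ⨆ j, (B τ j j + ∑ i ∈ Finset.univ.erase j, |B τ i j|)) *
          (∑ i, |x s i|) := by
  have hentry : ∀ i j : Fin (N+1), Continuous fun τ => B τ i j := fun i j =>
    (continuous_apply j).comp ((continuous_apply i).comp hBcont)
  have hγc : Continuous (fun τ => ⨆ j, (B τ j j + ∑ i ∈ Finset.univ.erase j, |B τ i j|)) := by
    have hc : ∀ j : Fin (N+1),
        Continuous (fun τ => B τ j j + ∑ i ∈ Finset.univ.erase j, |B τ i j|) := fun j =>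
      (hentry j j).add (continuous_finset_sum _ fun i _ => (hentry i j).abs)
    have heq : (fun τ => ⨆ j, (B τ j j + ∑ i ∈ Finset.univ.erase j, |B τ i j|))
        = fun τ => Finset.univ.sup' Finset.univ_nonempty
            (fun j => B τ j j + ∑ i ∈ Finset.univ.erase j, |B τ i j|) := by
      funext τ; rw [Finset.sup'_univ_eq_ciSup]
    rw [heq, continuous_iff_continuousAt]
    intro τ
    exact Filter.Tendsto.finset_sup'_nhds_apply _ (fun j _ => ((hc j).tendsto τ))
  set γ : ℝ → ℝ := fun τ => ⨆ j, (B τ j j + ∑ i ∈ Finset.univ.erase j, |B τ i j|) with hγdef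
  have hxc : Continuous x := continuous_iff_continuousAt.2 fun t => (hx t).continuousAt
  have hgc : Continuous (fun τ => ∑ i, |x τ i|) :=
    continuous_finset_sum _ fun i _ => ((continuous_apply i).comp hxc).abs
  have hgs0 : (0:ℝ) ≤ ∑ i, |x s i| := Finset.sum_nonneg fun i _ => abs_nonneg _
  intro T hT
  have hεbound : ∀ ε > 0, (∑ i, |x T i|) ≤
      (∑ i, |x s i| + ε) * Real.exp ((∫ τ in s..T, γ τ) + ε * (T - s)) := by
    intro ε hε
    set I := fun τ => ∫ u in s..τ, (γ u + ε) with hIdef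
    have hIderiv : ∀ τ, HasDerivAt I (γ τ + ε) τ := fun τ =>
      ((hγc.add continuous_const).integral_hasStrictDerivAt s τ).hasDerivAt
    set φ := fun τ => (∑ i, |x s i| + ε) * Real.exp (I τ) with hφdef
    have hφd : ∀ τ, HasDerivAt φ ((∑ i, |x s i| + ε) * (Real.exp (I τ) * (γ τ + ε))) τ :=
      fun τ => ((hIderiv τ).exp.const_mul _)
    have hφpos : ∀ τ, 0 < φ τ :=
      fun τ => mul_pos (by linarith) (Real.exp_pos _)
    have main := image_le_of_liminf_slope_right_lt_deriv_boundary
      (f := fun τ => ∑ i, |x τ i|) (f' := fun τ => γ τ * ∑ i, |x τ i|) (a := s) (b := T)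
      hgc.continuousOn
      (fun τ _ r hr => (slope_eventually_lt B x hx τ r hr).frequently)
      (B := φ) (B' := fun τ => (∑ i, |x s i| + ε) * (Real.exp (I τ) * (γ τ + ε)))
      (by
        have : I s = 0 := intervalIntegral.integral_same
        simp only [hφdef, this, Real.exp_zero, mul_one]
        linarith)
      hφd
      (fun τ _ hcontact => by
        have hpos := hφpos τ
        have : (∑ i, |x s i| + ε) * (Real.exp (I τ) * (γ τ + ε)) = (γ τ + ε) * φ τ := by
          rw [hφdef]; ring
        rw [this, hcontact]
        nlinarith)
    have hres := main (Set.right_mem_Icc.2 hT)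
    have hIeq : I T = (∫ τ in s..T, γ τ) + ε * (T - s) := by
      show (∫ u in s..T, (γ u + ε)) = _
      rw [intervalIntegral.integral_add (hγc.intervalIntegrable s T)
        (intervalIntegrable_const)]
      rw [intervalIntegral.integral_const, smul_eq_mul]
      ring
    rw [hφdef] at hres
    simpa [hIeq] using hres
  have tnd : Tendsto (fun ε => (∑ i, |x s i| + ε) *
        Real.exp ((∫ τ in s..T, γ τ) + ε * (T - s))) (𝓝[>] 0)
      (𝓝 ((∑ i, |x s i| + 0) * Real.exp ((∫ τ in s..T, γ τ) + 0 * (T - s)))) := by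
    apply Filter.Tendsto.mono_left _ nhdsWithin_le_nhds
    exact Continuous.tendsto (by continuity) 0
  have final := ge_of_tendsto tnd
    (eventually_nhdsWithin_of_forall fun ε hε => hεbound ε hε)
  simp only [add_zero, zero_mul] at final
  linarith [final]
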